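/- Let b > 0 and let s < t with t − s ≥ 1. Let γ : [s,t] → ℝ^d be a continuously differentiable curve with |γ(s)| ≤ b and γ(t) = x, which minimizes A^W_{s,t} among all absolutely continuous curves with the same endpoints and which satisfies, for every u ∈ [s,t], the Euler–Lagrange identity γ̇(t) = γ̇(u) + ∫_u^t ∇²F(γ(τ)) γ̇(τ) (W(τ) − W(t)) dτ + ∇F(γ(u))·(W(u) − W(t)). Then there is a constant c > 0, depending only on b, C₀, C₁ and C₂ (and not on x, s, t, W), such that |γ̇(t)| ≤ c·(t − s)·( 1 + |x|² + max_{s ≤ τ ≤ t} |W(τ) − W(t)|² ). -/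

import Mathlib

open MeasureTheory Set Real RealInnerProductSpace

/-- `γ : [s,t] → ℝ^d` is absolutely continuous with (integrable) derivative `γ'`:
`γ τ = γ s + ∫_s^τ γ' u du` for all `τ ∈ [s,t]`. -/
def IsACWith {d : ℕ} (γ γ' : ℝ → EuclideanSpace ℝ (Fin d)) (s t : ℝ) : Prop :=
  IntervalIntegrable γ' volume s t ∧
    ∀ τ ∈ Set.Icc s t, γ τ = γ s + ∫ u in s..τ, γ' u

/-- The action `A^{W}_{s,t}(γ) = ∫_s^t ((1/2)|γ̇|² + ∇F(γ)·γ̇ (W(τ) - W(t))) dτ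
+ F(γ(s)) (W(s) - W(t))`, expressed via the pair `(γ, γ')`. -/
noncomputable def actionW {d : ℕ} (F : EuclideanSpace ℝ (Fin d) → ℝ) (W : ℝ → ℝ)
    (γ γ' : ℝ → EuclideanSpace ℝ (Fin d)) (s t : ℝ) : ℝ :=
  (∫ τ in s..t, ((1/2) * ‖γ' τ‖^2 + ⟪gradient F (γ τ), γ' τ⟫ * (W τ - W t)))
    + F (γ s) * (W s - W t)

/-- `max_{s ≤ τ ≤ t} |W(τ) - W(t)|`. -/
noncomputable def maxW (W : ℝ → ℝ) (s t : ℝ) : ℝ :=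
  sSup ((fun τ => |W τ - W t|) '' Set.Icc s t)

set_option maxHeartbeats 1600000 in
/-- Let `t - s ≥ 1` and let `γ : [s,t] → ℝ^d` be a continuously
differentiable curve with `|γ(s)| ≤ b`, `γ(t) = x`, minimizing `A^W_{s,t}` among curves with
the same endpoints and satisfying the Euler–Lagrange identity
`γ̇(t) = γ̇(u) + ∫_u^t ∇²F(γ(τ)) γ̇(τ)(W(τ) - W(t)) dτ + ∇F(γ(u))(W(u) - W(t))` for
`u ∈ [s,t]`. Then `|γ̇(t)| ≤ c (t - s)(1 + |x|² + max_{s≤τ≤t} |W(τ) - W(t)|²)` for a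
constant `c > 0` depending only on `b, C₀, C₁, C₂` (not on `x, s, t, W`). -/
theorem minimizer_endpoint_velocity_bound_nonperiodic (b C₀ C₁ C₂ : ℝ) (hb : 0 < b) :
    ∃ c : ℝ, 0 < c ∧
      ∀ (d : ℕ), 1 ≤ d →
      ∀ F : EuclideanSpace ℝ (Fin d) → ℝ, ContDiff ℝ 2 F →
        (∀ x, |F x| ≤ C₀) → (∀ x, ‖gradient F x‖ ≤ C₁) →
        (∀ x, ‖fderiv ℝ (gradient F) x‖ ≤ C₂) →
      ∀ W : ℝ → ℝ, Continuous W →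
      ∀ s t : ℝ, s < t → 1 ≤ t - s →
      ∀ x : EuclideanSpace ℝ (Fin d),
      ∀ γ γ' : ℝ → EuclideanSpace ℝ (Fin d), IsACWith γ γ' s t →
        ContinuousOn γ' (Set.Icc s t) →
        ‖γ s‖ ≤ b → γ t = x →
        -- `γ` minimizes the action among curves with the same endpoints
        (∀ σ σ' : ℝ → EuclideanSpace ℝ (Fin d), IsACWith σ σ' s t →
          σ s = γ s → σ t = γ t → actionW F W γ γ' s t ≤ actionW F W σ σ' s t) →
        -- the Euler–Lagrange identity
        (∀ u ∈ Set.Icc s t,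
          γ' t = γ' u + (∫ τ in u..t, (W τ - W t) • fderiv ℝ (gradient F) (γ τ) (γ' τ))
            + (W u - W t) • gradient F (γ u)) →
        ‖γ' t‖ ≤ c * (t - s) * (1 + ‖x‖^2 + (maxW W s t)^2) := by
  refine ⟨3 + b^2 + |C₀| + |C₁| * (2 + b) + C₁^2 + 2*C₂^2, by positivity, ?_⟩
  intro d hd F hF hC0 hC1 hC2 W hW s t hst hT1 x γ γ' hAC hγ' hγs hγt hmin hEL
  have hsle : s ≤ t := hst.le
  have hC0' : 0 ≤ C₀ := (abs_nonneg _).trans (hC0 0)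
  have hC1' : 0 ≤ C₁ := (norm_nonneg _).trans (hC1 0)
  have hC2' : 0 ≤ C₂ := (norm_nonneg _).trans (hC2 0)
  set T : ℝ := t - s with hT
  set M : ℝ := maxW W s t with hM
  set X : ℝ := ‖x‖ with hX
  have hX0 : 0 ≤ X := norm_nonneg _
  have hMle : ∀ τ ∈ Icc s t, |W τ - W t| ≤ M := by
    intro τ hτ
    apply le_csSup ((isCompact_Icc.image (by fun_prop)).bddAbove)
    exact ⟨τ, hτ, rfl⟩
  have hM0 : 0 ≤ M := (abs_nonneg _).trans (hMle t ⟨hsle, le_rfl⟩)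
  -- regularity of F's derivatives
  have hgrad_cd : ContDiff ℝ 1 (gradient F) := by
    have : ContDiff ℝ 1 (fun y => (InnerProductSpace.toDual ℝ (EuclideanSpace ℝ (Fin d))).symm
        (fderiv ℝ F y)) :=
      ((InnerProductSpace.toDual ℝ _).symm.contDiff).comp (hF.fderiv_right (by norm_num))
    exact this
  have hgradc : Continuous (gradient F) := hgrad_cd.continuous
  have hHc : Continuous (fderiv ℝ (gradient F)) := hgrad_cd.continuous_fderiv one_ne_zero
  -- continuity of γ
  have hγc : ContinuousOn γ (Icc s t) := by
    have h1 : ContinuousOn (fun τ => γ s + ∫ u in s..τ, γ' u) (Icc s t) := by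
      apply continuousOn_const.add
      have := intervalIntegral.continuousOn_primitive_interval' hAC.1
        (by rw [Set.uIcc_of_le hsle]; exact ⟨le_rfl, hsle⟩)
      rwa [Set.uIcc_of_le hsle] at this
    exact h1.congr hAC.2
  -- key integrabilities
  have hint2 : IntervalIntegrable (fun τ => ‖γ' τ‖^2) volume s t := by
    apply ContinuousOn.intervalIntegrable
    rw [Set.uIcc_of_le hsle]
    exact (hγ'.norm).pow 2
  have hintn : IntervalIntegrable (fun τ => ‖γ' τ‖) volume s t := by
    apply ContinuousOn.intervalIntegrable
    rw [Set.uIcc_of_le hsle]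
    exact hγ'.norm
  have hintP : IntervalIntegrable
      (fun τ => ⟪gradient F (γ τ), γ' τ⟫ * (W τ - W t)) volume s t := by
    apply ContinuousOn.intervalIntegrable
    rw [Set.uIcc_of_le hsle]
    exact ((hgradc.comp_continuousOn hγc).inner hγ').mul
      ((hW.continuousOn).sub continuousOn_const)
  set E : ℝ := ∫ τ in s..t, ‖γ' τ‖^2 with hE
  set L : ℝ := ∫ τ in s..t, ‖γ' τ‖ with hL
  have hE0 : 0 ≤ E := intervalIntegral.integral_nonneg hsle (fun u _ => by positivity)
  have hL0 : 0 ≤ L := intervalIntegral.integral_nonneg hsle (fun u _ => norm_nonneg _)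
  -- energy bound from minimality
  have hTpos : (0:ℝ) < t - s := sub_pos.2 hst
  have hbd : ∀ (y : EuclideanSpace ℝ (Fin d)) (w : EuclideanSpace ℝ (Fin d)), ∀ τ ∈ Icc s t,
      ⟪gradient F y, w⟫ * (W τ - W t) ≤ C₁ * ‖w‖ * M := by
    intro y w τ hτ
    have h1 : |⟪gradient F y, w⟫ * (W τ - W t)| ≤ (C₁ * ‖w‖) * M := by
      rw [abs_mul]
      refine mul_le_mul ((abs_real_inner_le_norm _ _).trans
        (mul_le_mul_of_nonneg_right (hC1 _) (norm_nonneg _))) (hMle τ hτ) (abs_nonneg _)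
        (by positivity)
    calc ⟪gradient F y, w⟫ * (W τ - W t) ≤ |⟪gradient F y, w⟫ * (W τ - W t)| := le_abs_self _
      _ ≤ C₁ * ‖w‖ * M := h1
  have hFbd : |F (γ s) * (W s - W t)| ≤ C₀ * M := by
    rw [abs_mul]
    exact mul_le_mul (hC0 _) (hMle s ⟨le_rfl, hsle⟩) (abs_nonneg _) hC0'
  have hEbound : E ≤ 2*(X+b)^2 + 4*C₁*M*(X+b) + 8*C₀*M + 4*C₁^2*M^2*T := by
    set v : EuclideanSpace ℝ (Fin d) := (t-s)⁻¹ • (x - γ s) with hv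
    -- the straight-line comparison curve
    have hACσ : IsACWith (fun τ => γ s + (τ - s) • v) (fun _ => v) s t :=
      ⟨intervalIntegrable_const, fun τ _ => by rw [intervalIntegral.integral_const]; simp⟩
    have hσs : (fun τ => γ s + (τ - s) • v) s = γ s := by simp
    have hσt : (fun τ => γ s + (τ - s) • v) t = γ t := by
      simp only [hγt, hv, smul_smul, mul_inv_cancel₀ hTpos.ne', one_smul]
      abel
    have hmin' := hmin _ _ hACσ hσs hσt
    -- lower bound for the action of γ
    have hsplit : actionW F W γ γ' s t
        = (1/2)*E + (∫ τ in s..t, ⟪gradient F (γ τ), γ' τ⟫ * (W τ - W t))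
          + F (γ s) * (W s - W t) := by
      rw [actionW, intervalIntegral.integral_add (hint2.const_mul _) hintP,
        intervalIntegral.integral_const_mul]
    have hPlow : -((1/4)*E + C₁^2*M^2*T)
        ≤ ∫ τ in s..t, ⟪gradient F (γ τ), γ' τ⟫ * (W τ - W t) := by
      have hptw : ∀ τ ∈ Icc s t, -((1/4) * ‖γ' τ‖^2 + C₁^2*M^2)
          ≤ ⟪gradient F (γ τ), γ' τ⟫ * (W τ - W t) := by
        intro τ hτ
        have h1 : |⟪gradient F (γ τ), γ' τ⟫ * (W τ - W t)| ≤ C₁ * ‖γ' τ‖ * M := by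
          rw [abs_mul]
          refine mul_le_mul ((abs_real_inner_le_norm _ _).trans
            (mul_le_mul_of_nonneg_right (hC1 _) (norm_nonneg _))) (hMle τ hτ) (abs_nonneg _)
            (by positivity)
        have h2 := neg_abs_le (⟪gradient F (γ τ), γ' τ⟫ * (W τ - W t))
        nlinarith only [h1, h2, sq_nonneg (‖γ' τ‖ - 2*C₁*M)]
      have h_int_neg : IntervalIntegrable (fun τ => -((1/4) * ‖γ' τ‖^2 + C₁^2*M^2))
          volume s t := by
        apply ContinuousOn.intervalIntegrable
        rw [Set.uIcc_of_le hsle]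
        exact ((continuousOn_const.mul ((hγ'.norm).pow 2)).add continuousOn_const).neg
      have hmono : (∫ τ in s..t, -((1/4) * ‖γ' τ‖^2 + C₁^2*M^2))
          ≤ ∫ τ in s..t, ⟪gradient F (γ τ), γ' τ⟫ * (W τ - W t) :=
        intervalIntegral.integral_mono_on hsle h_int_neg hintP hptw
      have heqI : (∫ τ in s..t, -((1/4) * ‖γ' τ‖^2 + C₁^2*M^2))
          = -((1/4)*E + C₁^2*M^2*T) := by
        rw [intervalIntegral.integral_neg,
          intervalIntegral.integral_add (hint2.const_mul _) intervalIntegrable_const,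
          intervalIntegral.integral_const_mul, intervalIntegral.integral_const, smul_eq_mul]
        ring
      rw [heqI] at hmono
      exact hmono
    -- upper bound for the action of σ
    have hvn : ‖v‖ = (t-s)⁻¹ * ‖x - γ s‖ := by
      rw [hv, norm_smul, Real.norm_eq_abs, abs_of_pos (inv_pos.2 hTpos)]
    have hintσ : IntervalIntegrable
        (fun τ => (1/2)*‖v‖^2 + ⟪gradient F (γ s + (τ - s) • v), v⟫ * (W τ - W t))
        volume s t := by
      apply ContinuousOn.intervalIntegrable
      rw [Set.uIcc_of_le hsle]
      refine continuousOn_const.add (ContinuousOn.mul ?_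
        ((hW.continuousOn).sub continuousOn_const))
      exact ((hgradc.comp (by fun_prop)).continuousOn).inner continuousOn_const
    have hAσ : actionW F W (fun τ => γ s + (τ - s) • v) (fun _ => v) s t
        ≤ (t-s)*((1/2)*‖v‖^2 + C₁*‖v‖*M) + C₀*M := by
      rw [actionW]
      have hI : (∫ τ in s..t, ((1/2)*‖v‖^2 + ⟪gradient F (γ s + (τ - s) • v), v⟫ * (W τ - W t)))
          ≤ (t-s)*((1/2)*‖v‖^2 + C₁*‖v‖*M) := by
        have := intervalIntegral.integral_mono_on hsle hintσ intervalIntegrable_const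
          (fun τ hτ => add_le_add le_rfl (hbd _ v τ hτ))
        rwa [intervalIntegral.integral_const, smul_eq_mul] at this
      have hFσ : F ((fun τ => γ s + (τ - s) • v) s) * (W s - W t) ≤ C₀ * M := by
        rw [hσs]
        exact (le_abs_self _).trans hFbd
      exact add_le_add hI hFσ
    -- put the pieces together
    have hflow : -(C₀*M) ≤ F (γ s) * (W s - W t) := neg_le_of_abs_le hFbd
    have hn : ‖x - γ s‖ ≤ X + b := (norm_sub_le x (γ s)).trans (by linarith)
    have hTv : (t-s) * ‖v‖ = ‖x - γ s‖ := by
      rw [hvn]; field_simp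
    have hinv1 : (t-s)⁻¹ ≤ 1 := by
      rw [inv_le_one_iff₀]; right; linarith
    have hup : (t-s)*((1/2)*‖v‖^2 + C₁*‖v‖*M) ≤ (1/2)*(X+b)^2 + C₁*M*(X+b) := by
      have e1 : (t-s)*((1/2)*‖v‖^2 + C₁*‖v‖*M)
          = (1/2)*((t-s)*‖v‖)*‖v‖ + C₁*M*((t-s)*‖v‖) := by ring
      rw [e1, hTv]
      have hvle : ‖v‖ ≤ X + b := by
        rw [hvn]
        calc (t-s)⁻¹ * ‖x - γ s‖ ≤ 1 * ‖x - γ s‖ :=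
            mul_le_mul_of_nonneg_right hinv1 (norm_nonneg _)
          _ = ‖x - γ s‖ := one_mul _
          _ ≤ X + b := hn
      have h0 : (0:ℝ) ≤ ‖x - γ s‖ := norm_nonneg _
      nlinarith only [hn, hvle, h0, norm_nonneg v, hC1', hM0, mul_nonneg hC1' hM0, hX0, hb.le]
    rw [hsplit] at hmin'
    have hupp := hmin'.trans hAσ
    clear_value v
    set I : ℝ := ∫ τ in s..t, ⟪gradient F (γ τ), γ' τ⟫ * (W τ - W t) with hI
    clear_value I T M X E L
    linarith only [hupp, hPlow, hflow, hup]
  -- Young : (1 + C₂ M) L ≤ E/4 + (1+C₂ M)^2 T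
  have hYoung : (1 + C₂*M) * L ≤ (1/4)*E + (1+C₂*M)^2 * T := by
    have h1 : (1 + C₂*M) * L = ∫ τ in s..t, (1 + C₂*M) * ‖γ' τ‖ :=
      (intervalIntegral.integral_const_mul _ _).symm
    have h2 : (∫ τ in s..t, (1 + C₂*M) * ‖γ' τ‖)
        ≤ ∫ τ in s..t, ((1/4) * ‖γ' τ‖^2 + (1+C₂*M)^2) := by
      refine intervalIntegral.integral_mono_on hsle (hintn.const_mul _)
        ((hint2.const_mul _).add intervalIntegrable_const) (fun τ _ => ?_)
      nlinarith only [sq_nonneg (‖γ' τ‖ - 2*(1+C₂*M))]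
    have h3 : (∫ τ in s..t, ((1/4) * ‖γ' τ‖^2 + (1+C₂*M)^2))
        = (1/4)*E + (1+C₂*M)^2 * T := by
      rw [intervalIntegral.integral_add (hint2.const_mul _) intervalIntegrable_const,
        intervalIntegral.integral_const_mul, intervalIntegral.integral_const, smul_eq_mul]
      ring
    linarith [h1, h2, h3]
  -- minimal point of ‖γ'‖ on [s,t]
  obtain ⟨u₀, hu₀mem, hu₀min'⟩ := isCompact_Icc.exists_isMinOn ⟨t, hsle, le_rfl⟩ (hγ'.norm)
  have hu₀min : ∀ τ ∈ Icc s t, ‖γ' u₀‖ ≤ ‖γ' τ‖ := fun τ hτ => hu₀min' hτ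
  have hu₀L : ‖γ' u₀‖ ≤ L := by
    have h1 : T * ‖γ' u₀‖ ≤ L := by
      have := intervalIntegral.integral_mono_on hsle intervalIntegrable_const hintn
        (fun τ hτ => hu₀min τ hτ)
      rwa [intervalIntegral.integral_const, smul_eq_mul] at this
    nlinarith only [h1, hT1, norm_nonneg (γ' u₀)]
  -- the Euler–Lagrange bound at u₀
  have hELb : ‖γ' t‖ ≤ ‖γ' u₀‖ + C₂*M*L + C₁*M := by
    have hu₀t : u₀ ≤ t := hu₀mem.2
    have hIccsub : Icc u₀ t ⊆ Icc s t := Icc_subset_Icc hu₀mem.1 le_rfl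
    have hgcont : ContinuousOn
        (fun τ => (W τ - W t) • fderiv ℝ (gradient F) (γ τ) (γ' τ)) (Icc s t) :=
      ((hW.continuousOn.sub continuousOn_const).smul
        ((hHc.comp_continuousOn hγc).clm_apply hγ'))
    have hgint : IntervalIntegrable
        (fun τ => (W τ - W t) • fderiv ℝ (gradient F) (γ τ) (γ' τ)) volume u₀ t := by
      apply ContinuousOn.intervalIntegrable
      rw [Set.uIcc_of_le hu₀t]
      exact hgcont.mono hIccsub
    have hCMint : IntervalIntegrable (fun τ => C₂*M*‖γ' τ‖) volume s t := hintn.const_mul _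
    have hsub : Set.uIcc u₀ t ⊆ Set.uIcc s t := by
      rw [Set.uIcc_of_le hu₀t, Set.uIcc_of_le hsle]; exact hIccsub
    have hsub2 : Set.uIcc s u₀ ⊆ Set.uIcc s t := by
      rw [Set.uIcc_of_le hu₀mem.1, Set.uIcc_of_le hsle]
      exact Icc_subset_Icc le_rfl hu₀t
    have hInorm : ‖∫ τ in u₀..t, (W τ - W t) • fderiv ℝ (gradient F) (γ τ) (γ' τ)‖
        ≤ C₂*M*L := by
      calc ‖∫ τ in u₀..t, (W τ - W t) • fderiv ℝ (gradient F) (γ τ) (γ' τ)‖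
          ≤ ∫ τ in u₀..t, ‖(W τ - W t) • fderiv ℝ (gradient F) (γ τ) (γ' τ)‖ :=
            intervalIntegral.norm_integral_le_integral_norm hu₀t
        _ ≤ ∫ τ in u₀..t, C₂*M*‖γ' τ‖ := by
            refine intervalIntegral.integral_mono_on hu₀t ?_ (hCMint.mono_set hsub)
              (fun τ hτ => ?_)
            · apply ContinuousOn.intervalIntegrable
              rw [Set.uIcc_of_le hu₀t]
              exact (hgcont.mono hIccsub).norm
            · rw [norm_smul, Real.norm_eq_abs]
              have h1 : ‖fderiv ℝ (gradient F) (γ τ) (γ' τ)‖ ≤ C₂ * ‖γ' τ‖ :=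
                ((fderiv ℝ (gradient F) (γ τ)).le_opNorm (γ' τ)).trans
                  (mul_le_mul_of_nonneg_right (hC2 _) (norm_nonneg _))
              have h2 : |W τ - W t| ≤ M := hMle τ (hIccsub hτ)
              calc |W τ - W t| * ‖fderiv ℝ (gradient F) (γ τ) (γ' τ)‖
                  ≤ M * (C₂ * ‖γ' τ‖) :=
                    mul_le_mul h2 h1 (norm_nonneg _) hM0
                _ = C₂*M*‖γ' τ‖ := by ring
        _ ≤ C₂*M*L := by
            have hadd := intervalIntegral.integral_add_adjacent_intervals
              (hCMint.mono_set hsub2) (hCMint.mono_set hsub)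
            have hnn : 0 ≤ ∫ τ in s..u₀, C₂*M*‖γ' τ‖ :=
              intervalIntegral.integral_nonneg hu₀mem.1 (fun τ _ => by positivity)
            have hCL : (∫ τ in s..t, C₂*M*‖γ' τ‖) = C₂*M*L :=
              intervalIntegral.integral_const_mul _ _
            linarith [hadd, hnn, hCL]
    have heq := hEL u₀ hu₀mem
    calc ‖γ' t‖ = ‖(γ' u₀ + ∫ τ in u₀..t, (W τ - W t) • fderiv ℝ (gradient F) (γ τ) (γ' τ))
          + (W u₀ - W t) • gradient F (γ u₀)‖ := by rw [← heq]
      _ ≤ ‖γ' u₀ + ∫ τ in u₀..t, (W τ - W t) • fderiv ℝ (gradient F) (γ τ) (γ' τ)‖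
          + ‖(W u₀ - W t) • gradient F (γ u₀)‖ := norm_add_le _ _
      _ ≤ (‖γ' u₀‖ + ‖∫ τ in u₀..t, (W τ - W t) • fderiv ℝ (gradient F) (γ τ) (γ' τ)‖)
          + ‖(W u₀ - W t) • gradient F (γ u₀)‖ := by
            gcongr
            exact norm_add_le _ _
      _ ≤ (‖γ' u₀‖ + C₂*M*L) + C₁*M := by
            have hsm : ‖(W u₀ - W t) • gradient F (γ u₀)‖ ≤ C₁*M := by
              rw [norm_smul, Real.norm_eq_abs]
              calc |W u₀ - W t| * ‖gradient F (γ u₀)‖ ≤ M * C₁ :=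
                    mul_le_mul (hMle u₀ hu₀mem) (hC1 _) (norm_nonneg _) hM0
                _ = C₁*M := by ring
            exact add_le_add (add_le_add le_rfl hInorm) hsm
      _ = ‖γ' u₀‖ + C₂*M*L + C₁*M := by ring
  -- final arithmetic
  have hfin : ‖γ' t‖ ≤ (1/4)*E + (1+C₂*M)^2*T + C₁*M := by nlinarith only [hELb, hYoung, hu₀L, mul_nonneg hC2' hM0]
  set Q : ℝ := 1 + X^2 + M^2 with hQ
  have hT0 : (0:ℝ) ≤ T := by linarith
  have hQ1 : (1:ℝ) ≤ Q := by nlinarith only [sq_nonneg X, sq_nonneg M, hQ]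
  have hTQQ : Q ≤ T*Q := by nlinarith only [hT1, hQ1]
  have hTQ1 : (1:ℝ) ≤ T*Q := hQ1.trans hTQQ
  have hX2Q : X^2 ≤ Q := by nlinarith only [hQ, sq_nonneg M]
  have hM2Q : M^2 ≤ Q := by nlinarith only [hQ, sq_nonneg X]
  have hMQ : 2*M ≤ Q := by nlinarith only [hQ, sq_nonneg (M-1), sq_nonneg X]
  have hMXQ : 2*(M*X) ≤ Q := by nlinarith only [hQ, sq_nonneg (M-X)]
  clear_value T M X E L Q
  rw [abs_of_nonneg hC0', abs_of_nonneg hC1']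
  have t1 : (1/2)*(X+b)^2 ≤ (1+b^2)*(T*Q) := by
    nlinarith only [sq_nonneg (X-b), hX2Q, hTQQ, hTQ1, sq_nonneg b]
  have t2 : C₁*M*(X+b) ≤ (C₁*(1+b))*(T*Q) := by
    nlinarith only [hMXQ, hMQ, hTQQ, hC1', mul_nonneg hC1' hb.le, hQ1]
  have t3 : 2*C₀*M ≤ C₀*(T*Q) := by
    nlinarith only [hC0', hMQ, hTQQ]
  have t4 : C₁^2*M^2*T ≤ C₁^2*(T*Q) := by
    nlinarith only [mul_nonneg (sq_nonneg C₁) hT0, hM2Q]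
  have t5a : (1+C₂*M)^2 ≤ (2+2*C₂^2)*Q := by
    nlinarith only [sq_nonneg (C₂*M-1), hM2Q, sq_nonneg C₂, hQ1]
  have t5 : (1+C₂*M)^2*T ≤ (2+2*C₂^2)*(T*Q) := by
    nlinarith only [t5a, hT0, hT1, sq_nonneg (1+C₂*M)]
  have t6 : C₁*M ≤ C₁*(T*Q) := by
    nlinarith only [hC1', hMQ, hTQQ, hQ1, hM0]
  nlinarith only [hfin, hEbound, t1, t2, t3, t4, t5, t6]
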